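/- Let G be the 4-cycle on vertices {1,2,3,4} with edges (1,2),(2,3),(3,4),(4,1). There exist positive rates ν_1,...,ν_4 achieving hard-core marginals θ = (θ_1, 1/4, 1/4, 1/4) for all sufficiently small θ_1 > 0, and the required rate ν_3 is not constant in θ_1; in particular, as θ_1 → 0 the required ν_3 tends to 3/4, while at θ_1 = 1/4 (the symmetric fair point) the required ν_3 equals 1/√2. Hence on non-chordal graphs the required back-off rate of a node can depend on the target throughput of a non-neighboring node. -/

import Mathlib

open scoped Classical
open Finset

/-- Weight of a 0-1 configuration `z` with back-off rates `ν`. -/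
noncomputable def hcWeight {n : ℕ} (ν : Fin n → ℝ) (z : Fin n → Bool) : ℝ :=
  ∏ i, if z i then ν i else 1

/-- `z` is an independent-set indicator vector for adjacency `A`. -/
def hcIndep {n : ℕ} (A : Fin n → Fin n → Prop) (z : Fin n → Bool) : Prop :=
  ∀ i j, A i j → ¬(z i = true ∧ z j = true)

/-- Normalizing constant of the hard-core model. -/
noncomputable def hcZ (n : ℕ) (A : Fin n → Fin n → Prop) (ν : Fin n → ℝ) : ℝ :=
  ∑ z : Fin n → Bool, if hcIndep A z then hcWeight ν z else 0

/-- Marginal activity probability of node `i` in the hard-core model. -/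
noncomputable def hcMarginal (n : ℕ) (A : Fin n → Fin n → Prop) (ν : Fin n → ℝ)
    (i : Fin n) : ℝ :=
  (∑ z : Fin n → Bool, if hcIndep A z ∧ z i = true then hcWeight ν z else 0) / hcZ n A ν

/-- Adjacency of the 4-cycle on vertices `0,1,2,3` (paper vertices `1,2,3,4`). -/
def c4Adj (a b : Fin 4) : Prop :=
  (a.val + 1) % 4 = b.val ∨ (b.val + 1) % 4 = a.val

/-- on the 4-cycle there are positive rates achieving marginals
`(θ₁, 1/4, 1/4, 1/4)` for every `θ₁ ∈ (0, 1/4]` (in particular for all sufficiently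
small `θ₁ > 0`); the required rate of node 3 (vertex `2` here, non-adjacent to
vertex `0`) is not constant in `θ₁`: it tends to `3/4` as `θ₁ → 0⁺` and equals
`1/√2` at `θ₁ = 1/4`. -/
def e4 : Bool × Bool × Bool × Bool ≃ (Fin 4 → Bool) where
  toFun p := ![p.1, p.2.1, p.2.2.1, p.2.2.2]
  invFun z := (z 0, z 1, z 2, z 3)
  left_inv := by decide
  right_inv := by decide

instance (a b : Fin 4) : Decidable (c4Adj a b) := by unfold c4Adj; infer_instance
instance (z : Fin 4 → Bool) : Decidable (hcIndep c4Adj z) := by unfold hcIndep; infer_instance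

lemma hcIndep_c4 (z : Fin 4 → Bool) : hcIndep c4Adj z ↔
    ((z 0 && z 1) = false ∧ (z 1 && z 2) = false ∧ (z 2 && z 3) = false ∧ (z 3 && z 0) = false) := by
  revert z; decide

lemma hcZ_c4 (ν : Fin 4 → ℝ) :
    hcZ 4 c4Adj ν = 1 + ν 0 + ν 1 + ν 2 + ν 3 + ν 0 * ν 2 + ν 1 * ν 3 := by
  rw [hcZ, ← Equiv.sum_comp e4]
  simp only [Fintype.sum_prod_type, Fintype.sum_bool]
  simp [e4, hcIndep_c4, hcWeight, Fin.prod_univ_four]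
  ring

lemma hcMarginal_c4 (ν : Fin 4 → ℝ) (i : Fin 4) :
    hcMarginal 4 c4Adj ν i = (ν i + ν i * ν (i + 2)) / hcZ 4 c4Adj ν := by
  rw [hcMarginal]
  congr 1
  rw [← Equiv.sum_comp e4]
  simp only [Fintype.sum_prod_type, Fintype.sum_bool]
  fin_cases i <;>
    simp [e4, hcIndep_c4, hcWeight, Fin.prod_univ_four] <;> ring

noncomputable def wfun (t : ℝ) : ℝ :=
  (11 - 12 * t + Real.sqrt (16 * t ^ 2 - 72 * t + 49)) / (12 - 16 * t)

noncomputable def nufun (t : ℝ) : Fin 4 → ℝ :=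
  ![wfun t * (2 * wfun t - 3), wfun t - 1, wfun t / (2 * wfun t - 1), wfun t - 1]

lemma wfun_facts {t : ℝ} (ht0 : 0 < t) (ht4 : t ≤ 1 / 4) :
    (3 / 2 : ℝ) < wfun t ∧
      (6 - 8 * t) * wfun t ^ 2 + (12 * t - 11) * wfun t + (3 - 4 * t) = 0 := by
  have harg : (0 : ℝ) ≤ 16 * t ^ 2 - 72 * t + 49 := by nlinarith
  have hD2 : Real.sqrt (16 * t ^ 2 - 72 * t + 49) ^ 2 = 16 * t ^ 2 - 72 * t + 49 :=
    Real.sq_sqrt harg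
  have hDnn : 0 ≤ Real.sqrt (16 * t ^ 2 - 72 * t + 49) := Real.sqrt_nonneg _
  set D := Real.sqrt (16 * t ^ 2 - 72 * t + 49) with hD
  have hden : (0 : ℝ) < 12 - 16 * t := by linarith
  have hw : wfun t * (12 - 16 * t) = 11 - 12 * t + D := by
    rw [wfun]; exact div_mul_cancel₀ _ (ne_of_gt hden)
  have hDgt : 7 - 12 * t < D := by
    nlinarith [hD2, hDnn]
  constructor
  · rw [wfun]
    rw [lt_div_iff₀ hden]
    nlinarith
  · nlinarith [hw, hD2]

lemma wfun_quarter : wfun (1 / 4) = 1 + Real.sqrt 2 / 2 := by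
  have h32 : Real.sqrt (16 * (1/4 : ℝ) ^ 2 - 72 * (1/4) + 49) = 4 * Real.sqrt 2 := by
    have : (16 * (1/4 : ℝ) ^ 2 - 72 * (1/4) + 49) = 4 ^ 2 * 2 := by norm_num
    rw [this, Real.sqrt_mul (by norm_num), Real.sqrt_sq (by norm_num)]
  rw [wfun, h32]; ring

lemma wfun_zero : wfun 0 = 3 / 2 := by
  have : (16 * (0:ℝ) ^ 2 - 72 * 0 + 49) = 7 ^ 2 := by norm_num
  rw [wfun, this, Real.sqrt_sq (by norm_num)]; norm_num

lemma wfun_s : wfun (19 / 132) = 8 / 5 := by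
  have : (16 * (19/132:ℝ) ^ 2 - 72 * (19/132) + 49) = (206/33) ^ 2 := by norm_num
  rw [wfun, this, Real.sqrt_sq (by norm_num)]; norm_num

theorem stmt15 :
    ∃ ν : ℝ → Fin 4 → ℝ,
      (∀ t ∈ Set.Ioc (0 : ℝ) (1 / 4),
        (∀ i, 0 < ν t i) ∧
        ∀ i : Fin 4, hcMarginal 4 c4Adj (ν t) i = if i = 0 then t else 1 / 4) ∧
      (∃ s t, s ∈ Set.Ioc (0 : ℝ) (1 / 4) ∧ t ∈ Set.Ioc (0 : ℝ) (1 / 4) ∧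
        ν s 2 ≠ ν t 2) ∧
      Filter.Tendsto (fun t => ν t 2) (nhdsWithin 0 (Set.Ioi 0)) (nhds (3 / 4)) ∧
      ν (1 / 4) 2 = 1 / Real.sqrt 2 := by
  have hs2 : Real.sqrt 2 ^ 2 = 2 := Real.sq_sqrt (by norm_num)
  have hs2pos : (0 : ℝ) < Real.sqrt 2 := Real.sqrt_pos.mpr (by norm_num)
  have hnu2 : ∀ t, nufun t 2 = wfun t / (2 * wfun t - 1) := by
    intro t; rw [nufun]; simp
  have hval : nufun (1 / 4) 2 = 1 / Real.sqrt 2 := by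
    rw [hnu2, wfun_quarter]
    rw [div_eq_div_iff (by nlinarith) (by positivity)]
    nlinarith
  refine ⟨nufun, ?_, ?_, ?_, hval⟩
  · rintro t ⟨ht0, ht4⟩
    obtain ⟨h32, hQ⟩ := wfun_facts ht0 ht4
    set w := wfun t with hw
    have h2w : (0 : ℝ) < 2 * w - 1 := by linarith
    have hZ : hcZ 4 c4Adj (nufun t) = 4 * w * (w - 1) := by
      rw [hcZ_c4, nufun]
      simp only [Matrix.cons_val_zero, Matrix.cons_val_one, Matrix.head_cons,
        Matrix.cons_val_two, Matrix.tail_cons, Matrix.cons_val_three]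
      rw [← hw]
      have h2w' := ne_of_gt h2w
      have e : w / (2 * w - 1) * (2 * w - 1) = w := div_mul_cancel₀ _ h2w'
      linear_combination (w - 1) * e
    have hZpos : (0 : ℝ) < 4 * w * (w - 1) := by nlinarith
    constructor
    · intro i
      fin_cases i <;> simp [nufun] <;> [nlinarith; linarith; positivity; linarith]
    · intro i
      rw [hcMarginal_c4, hZ]
      have hZne := ne_of_gt hZpos
      have h2w' := ne_of_gt h2w
      fin_cases i
      · show (nufun t 0 + nufun t 0 * nufun t 2) / (4 * w * (w - 1)) = if (0 : Fin 4) = 0 then t else 1 / 4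
        rw [if_pos rfl, nufun]
        simp only [Matrix.cons_val_zero, Matrix.cons_val_two, Matrix.tail_cons, Matrix.head_cons]
        rw [div_eq_iff hZne]
        rw [← hw]
        have e : w / (2 * w - 1) * (2 * w - 1) = w := div_mul_cancel₀ _ h2w'
        apply mul_right_cancel₀ h2w'
        linear_combination (w : ℝ) * hQ + w * (2 * w - 3) * e
      · show (nufun t 1 + nufun t 1 * nufun t 3) / (4 * w * (w - 1)) = if (1 : Fin 4) = 0 then t else 1 / 4
        rw [if_neg (by decide), nufun]
        simp only [Matrix.cons_val_one, Matrix.head_cons, Matrix.cons_val_three,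
          Matrix.tail_cons, Matrix.cons_val_fin_one, Matrix.cons_val_zero]
        rw [div_eq_iff hZne]; ring
      · show (nufun t 2 + nufun t 2 * nufun t 0) / (4 * w * (w - 1)) = if (2 : Fin 4) = 0 then t else 1 / 4
        rw [if_neg (by decide), nufun]
        simp only [Matrix.cons_val_zero, Matrix.cons_val_two, Matrix.tail_cons, Matrix.head_cons]
        rw [div_eq_iff hZne]
        rw [← hw]
        have e : w / (2 * w - 1) * (2 * w - 1) = w := div_mul_cancel₀ _ h2w'
        apply mul_right_cancel₀ h2w'
        linear_combination (1 + w * (2 * w - 3)) * e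
      · show (nufun t 3 + nufun t 3 * nufun t 1) / (4 * w * (w - 1)) = if (3 : Fin 4) = 0 then t else 1 / 4
        rw [if_neg (by decide), nufun]
        simp only [Matrix.cons_val_one, Matrix.head_cons, Matrix.cons_val_three,
          Matrix.tail_cons, Matrix.cons_val_fin_one, Matrix.cons_val_zero]
        rw [div_eq_iff hZne]; ring
  · refine ⟨19 / 132, 1 / 4, ⟨by norm_num, by norm_num⟩, ⟨by norm_num, by norm_num⟩, ?_⟩
    rw [hval, hnu2, wfun_s]
    intro h
    have : (8 : ℝ) / 11 = 1 / Real.sqrt 2 := by rw [← h]; norm_num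
    rw [div_eq_div_iff (by norm_num) (ne_of_gt hs2pos)] at this
    nlinarith
  · have hcw : ContinuousAt wfun 0 := by
      rw [show wfun = fun t => (11 - 12 * t + Real.sqrt (16 * t ^ 2 - 72 * t + 49)) / (12 - 16 * t) from rfl]
      apply ContinuousAt.div
      · exact (continuousAt_const.sub (continuousAt_id.const_mul 12)).add
          ((Real.continuous_sqrt.continuousAt).comp (by fun_prop))
      · fun_prop
      · norm_num
    have hc : ContinuousAt (fun t => nufun t 2) 0 := by
      simp only [hnu2]
      apply ContinuousAt.div hcw ((hcw.const_mul 2).sub continuousAt_const)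
      show 2 * wfun 0 - 1 ≠ 0; rw [wfun_zero]; norm_num
    have := hc.tendsto.mono_left (nhdsWithin_le_nhds (s := Set.Ioi (0:ℝ)))
    rwa [hnu2, wfun_zero, show (3:ℝ)/2 / (2 * (3/2) - 1) = 3/4 by norm_num] at this
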